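/- In the game of n players with states in ZMod n (two equal-state players meet and one increments mod n), a state x ∈ ZMod n has the property that no player can ever change its state from x−1 to x in any execution from the initial configuration with state-counts k if and only if ∑_{j=1}^{i} k(x−j) ≤ i holds for all i ∈ {1,…,n−1}. In particular, the set of such states is uniquely determined by the initial configuration. -/

import Mathlib

/-- One step of the game: either nothing changes, or exactly one player `p`,
which shares its state with some other player `q`, increments its state by 1 (mod n). -/
def GameStep (n : ℕ) (s s' : Fin n → ZMod n) : Prop :=
  (∀ p, s' p = s p) ∨
    ∃ p, (∀ q, q ≠ p → s' q = s q) ∧ s' p = s p + 1 ∧ ∃ q, q ≠ p ∧ s q = s p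

namespace Stmt2Aux

open Finset

variable {n : ℕ}

/-- number of players in state `v` -/
def cnt (s : Fin n → ZMod n) (v : ZMod n) : ℕ :=
  (Finset.univ.filter (fun p => s p = v)).card

lemma cnt_eq_sum (s : Fin n → ZMod n) (v : ZMod n) :
    cnt s v = ∑ p, if s p = v then 1 else 0 := by
  exact Finset.card_filter _ _

lemma cnt_two {s : Fin n → ZMod n} {p q : Fin n} (hpq : p ≠ q) {v : ZMod n}
    (hp : s p = v) (hq : s q = v) : 2 ≤ cnt s v := by
  have : 1 < (Finset.univ.filter (fun r => s r = v)).card :=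
    Finset.one_lt_card.mpr ⟨p, by simp [hp], q, by simp [hq], hpq⟩
  exact this

lemma cnt_step {s s' : Fin n → ZMod n} {p : Fin n}
    (h : ∀ q, q ≠ p → s' q = s q) (v : ZMod n) :
    cnt s' v + (if s p = v then 1 else 0) = cnt s v + (if s' p = v then 1 else 0) := by
  rw [cnt_eq_sum, cnt_eq_sum,
    ← Finset.sum_erase_add Finset.univ _ (Finset.mem_univ p),
    ← Finset.sum_erase_add Finset.univ _ (Finset.mem_univ p)]
  have : ∑ q ∈ Finset.univ.erase p, (if s' q = v then 1 else 0)
      = ∑ q ∈ Finset.univ.erase p, (if s q = v then (1:ℕ) else 0) := by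
    refine Finset.sum_congr rfl fun q hq => ?_
    rw [h q (Finset.mem_erase.mp hq).1]
  rw [this]; ring

/-- weighted window-sum step identity -/
lemma sum_cnt_step {s s' : Fin n → ZMod n} {p : Fin n}
    (h : ∀ q, q ≠ p → s' q = s q) (x : ZMod n) (F : Finset ℕ) (w : ℕ → ℕ) :
    ∑ j ∈ F, w j * cnt s' (x - j) + ∑ j ∈ F, w j * (if s p = x - j then 1 else 0)
    = ∑ j ∈ F, w j * cnt s (x - j) + ∑ j ∈ F, w j * (if s' p = x - j then 1 else 0) := by
  rw [← Finset.sum_add_distrib, ← Finset.sum_add_distrib]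
  refine Finset.sum_congr rfl fun j _ => ?_
  rw [← Nat.mul_add, ← Nat.mul_add, cnt_step h (x - j)]

lemma cast_inj_of_lt {a b : ℕ} (ha : a < n) (hb : b < n) (h : (a : ZMod n) = b) : a = b := by
  have := congrArg ZMod.val h
  rwa [ZMod.val_natCast_of_lt ha, ZMod.val_natCast_of_lt hb] at this

lemma ind_one {i : ℕ} (hin : i ≤ n - 1) (hn : 1 ≤ n) (x : ZMod n) (w : ℕ → ℕ)
    {j0 : ℕ} (hj0 : j0 ∈ Finset.Icc 1 i) :
    ∑ j ∈ Finset.Icc 1 i, w j * (if x - (j0:ZMod n) = x - (j:ZMod n) then 1 else 0) = w j0 := by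
  have key : ∀ j ∈ Finset.Icc 1 i,
      w j * (if x - (j0:ZMod n) = x - (j:ZMod n) then 1 else 0)
      = if j = j0 then w j else 0 := by
    intro j hj
    simp only [Finset.mem_Icc] at hj hj0
    by_cases h : j = j0
    · subst h; simp
    · have : x - (j0:ZMod n) ≠ x - (j:ZMod n) := by
        intro hc
        exact h (cast_inj_of_lt (by omega) (by omega) (sub_right_injective hc)).symm
      simp [this, h]
  rw [Finset.sum_congr rfl key, Finset.sum_ite_eq' (Finset.Icc 1 i) j0 w, if_pos hj0]

lemma ind_zero {i : ℕ} (x v : ZMod n) (w : ℕ → ℕ)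
    (h : ∀ j ∈ Finset.Icc 1 i, v ≠ x - (j:ZMod n)) :
    ∑ j ∈ Finset.Icc 1 i, w j * (if v = x - (j:ZMod n) then 1 else 0) = 0 := by
  refine Finset.sum_eq_zero fun j hj => ?_
  simp [h j hj]

/-- window count -/
def W (x : ZMod n) (i : ℕ) (s : Fin n → ZMod n) : ℕ :=
  ∑ j ∈ Finset.Icc 1 i, cnt s (x - j)

lemma W_total [NeZero n] (x : ZMod n) (s : Fin n → ZMod n) :
    W x (n - 1) s + cnt s x = n := by
  have hn : 1 ≤ n := Nat.one_le_iff_ne_zero.mpr (NeZero.ne n)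
  have hinj : Set.InjOn (fun j : ℕ => x - (j:ZMod n)) (Finset.Icc 1 (n-1)) := by
    intro a ha b hb hab
    simp only [Finset.coe_Icc, Set.mem_Icc] at ha hb
    exact cast_inj_of_lt (by omega) (by omega) (sub_right_injective hab)
  have hcard : ((Finset.Icc 1 (n-1)).image (fun j : ℕ => x - (j:ZMod n))).card = n - 1 := by
    rw [Finset.card_image_of_injOn hinj, Nat.card_Icc]
    omega
  have himg : (Finset.Icc 1 (n-1)).image (fun j : ℕ => x - (j:ZMod n))
      = Finset.univ.erase x := by
    apply Finset.eq_of_subset_of_card_le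
    · intro v hv
      simp only [Finset.mem_image, Finset.mem_Icc] at hv
      obtain ⟨j, hj, rfl⟩ := hv
      refine Finset.mem_erase.mpr ⟨?_, Finset.mem_univ _⟩
      intro hc
      rw [sub_eq_self, ZMod.natCast_eq_zero_iff] at hc
      have := Nat.le_of_dvd (by omega) hc
      omega
    · rw [Finset.card_erase_of_mem (Finset.mem_univ x), Finset.card_univ, ZMod.card, hcard]
  have htot : ∑ v : ZMod n, cnt s v = n := by
    have := Finset.card_eq_sum_card_fiberwise
      (f := s) (s := Finset.univ) (t := Finset.univ) (fun p _ => Finset.mem_univ _)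
    simpa [cnt] using this.symm
  have hW : W x (n-1) s = ∑ v ∈ Finset.univ.erase x, cnt s v := by
    rw [← himg, Finset.sum_image hinj]
    rfl
  rw [hW, Finset.sum_erase_add _ _ (Finset.mem_univ x)]
  exact htot


lemma ind_one' {i : ℕ} (hin : i ≤ n - 1) (hn : 1 ≤ n) (x : ZMod n)
    {j0 : ℕ} (hj0 : j0 ∈ Finset.Icc 1 i) :
    ∑ j ∈ Finset.Icc 1 i, (if x - (j0:ZMod n) = x - (j:ZMod n) then 1 else 0) = 1 := by
  simpa using ind_one hin hn x (fun _ => 1) hj0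

lemma ind_zero' {i : ℕ} (x v : ZMod n)
    (h : ∀ j ∈ Finset.Icc 1 i, v ≠ x - (j:ZMod n)) :
    ∑ j ∈ Finset.Icc 1 i, (if v = x - (j:ZMod n) then 1 else 0) = 0 := by
  simpa using ind_zero x v (fun _ => 1) h

lemma W_step {s s' : Fin n → ZMod n} {p : Fin n}
    (h : ∀ q, q ≠ p → s' q = s q) (x : ZMod n) (i : ℕ) :
    W x i s' + ∑ j ∈ Finset.Icc 1 i, (if s p = x - (j:ZMod n) then 1 else 0)
    = W x i s + ∑ j ∈ Finset.Icc 1 i, (if s' p = x - (j:ZMod n) then 1 else 0) := by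
  simpa [W] using sum_cnt_step h x (Finset.Icc 1 i) (fun _ => 1)

lemma invariant [NeZero n] (x : ZMod n) (s : ℕ → Fin n → ZMod n)
    (hstep : ∀ t, GameStep n (s t) (s (t+1)))
    (H0 : ∀ i, 1 ≤ i → i ≤ n - 1 → W x i (s 0) ≤ i) :
    ∀ t i, 1 ≤ i → i ≤ n - 1 → W x i (s t) ≤ i := by
  have hn : 1 ≤ n := Nat.one_le_iff_ne_zero.mpr (NeZero.ne n)
  intro t
  induction t with
  | zero => exact H0
  | succ t ih =>
    intro i hi1 hin
    rcases hstep t with htriv | ⟨p, hq, hp1, q, hqp, hqq⟩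
    · rw [funext htriv]
      exact ih i hi1 hin
    · have key := W_step hq x i
      by_cases hcase : ∃ j0 ∈ Finset.Icc 1 i, s (t+1) p = x - (j0:ZMod n)
      · obtain ⟨j0, hj0, heq⟩ := hcase
        have e2 : ∑ j ∈ Finset.Icc 1 i, (if s (t+1) p = x - (j:ZMod n) then 1 else 0) = 1 := by
          rw [heq]; exact ind_one' hin hn x hj0
        have hj0' := Finset.mem_Icc.mp hj0
        have hc0 : s t p = x - (j0:ZMod n) - 1 := by
          have h' : s t p = s t p + 1 - 1 := by ring
          rw [h', ← hp1, heq]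
        rcases lt_or_eq_of_le hj0'.2 with hj0i | hj0i
        · -- j0 < i
          have hmem : j0 + 1 ∈ Finset.Icc 1 i := Finset.mem_Icc.mpr (by omega)
          have hc : s t p = x - ((j0+1 : ℕ) : ZMod n) := by
            rw [hc0]; push_cast; ring
          have e1 : ∑ j ∈ Finset.Icc 1 i, (if s t p = x - (j:ZMod n) then 1 else 0) = 1 := by
            rw [hc]; exact ind_one' hin hn x hmem
          have := ih i hi1 hin
          omega
        · -- j0 = i
          subst hj0i
          rcases lt_or_eq_of_le hin with hilt | hieq
          · -- i < n - 1
            have hc : s t p = x - ((j0+1 : ℕ) : ZMod n) := by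
              rw [hc0]; push_cast; ring
            have h2 : 2 ≤ cnt (s t) (x - ((j0+1 : ℕ) : ZMod n)) :=
              cnt_two hqp (hqq.trans hc) hc
            have hsum : W x (j0+1) (s t)
                = W x j0 (s t) + cnt (s t) (x - ((j0+1 : ℕ) : ZMod n)) := by
              rw [W, Finset.sum_Icc_succ_top (by omega : 1 ≤ j0 + 1)]; rfl
            have hle := ih (j0+1) (by omega) (by omega)
            have hle' := ih j0 hi1 hin
            omega
          · -- i = n - 1
            have hn1 : ((j0 : ℕ) : ZMod n) = -1 := by
              rw [hieq, Nat.cast_sub hn, ZMod.natCast_self, Nat.cast_one]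
              ring
            have hc : s t p = x := by
              rw [hc0, hn1]; ring
            have h2 : 2 ≤ cnt (s t) x := cnt_two hqp (hqq.trans hc) hc
            have htot := W_total x (s t)
            rw [← hieq] at htot
            omega
      · push_neg at hcase
        have e2 : ∑ j ∈ Finset.Icc 1 i, (if s (t+1) p = x - (j:ZMod n) then 1 else 0) = 0 :=
          ind_zero' x _ hcase
        have := ih i hi1 hin
        omega

lemma exists_init [NeZero n] (k : ZMod n → ℕ) (hk : ∑ c, k c = n) :
    ∃ s0 : Fin n → ZMod n, ∀ c, (Finset.univ.filter (fun p => s0 p = c)).card = k c := by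
  have ecard : Fintype.card (Σ c : ZMod n, Fin (k c)) = Fintype.card (Fin n) := by
    simp [hk]
  let e : (Σ c : ZMod n, Fin (k c)) ≃ Fin n := Fintype.equivOfCardEq ecard
  refine ⟨fun p => (e.symm p).1, fun c => ?_⟩
  have h1 : Finset.univ.filter (fun p : Fin n => (e.symm p).1 = c)
      = (Finset.univ.filter (fun σ : Σ c', Fin (k c') => σ.1 = c)).image e := by
    ext p
    simp only [Finset.mem_filter, Finset.mem_univ, true_and, Finset.mem_image]
    constructor
    · intro h
      exact ⟨e.symm p, h, e.apply_symm_apply p⟩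
    · rintro ⟨σ, hσ, rfl⟩
      rwa [e.symm_apply_apply]
  rw [h1, Finset.card_image_of_injective _ e.injective]
  have h2 : Finset.univ.filter (fun σ : Σ c', Fin (k c') => σ.1 = c)
      = ({c} : Finset (ZMod n)).sigma (fun _ => Finset.univ) := by
    ext σ
    simp [Finset.mem_sigma]
  rw [h2, Finset.card_sigma]
  simp

lemma reach [NeZero n] (x : ZMod n) {i : ℕ} (hi1 : 1 ≤ i) (hin : i ≤ n - 1) :
    ∀ N, ∀ s : Fin n → ZMod n, (∑ j ∈ Finset.Icc 1 i, j * cnt s (x - j)) ≤ N →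
    i + 1 ≤ W x i s →
    ∃ u : ℕ → Fin n → ZMod n, u 0 = s ∧ (∀ t, GameStep n (u t) (u (t+1))) ∧
      ∃ t p, u t p = x - 1 ∧ u (t+1) p = x ∧ u t p ≠ u (t+1) p := by
  have hn2 : 2 ≤ n := by
    have : 1 ≤ n := Nat.one_le_iff_ne_zero.mpr (NeZero.ne n)
    omega
  have hfind : ∀ s : Fin n → ZMod n, i + 1 ≤ W x i s →
      ∃ j ∈ Finset.Icc 1 i, 2 ≤ cnt s (x - j) := by
    intro s hW
    by_contra hcon
    push_neg at hcon
    have : W x i s ≤ ∑ _j ∈ Finset.Icc 1 i, 1 :=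
      Finset.sum_le_sum (fun j hj => by have := hcon j hj; omega)
    simp [Nat.card_Icc] at this
    omega
  intro N
  induction N with
  | zero =>
    intro s hPhi hW
    exfalso
    obtain ⟨j, hj, h2⟩ := hfind s hW
    have h1 : j * cnt s (x - (j:ZMod n)) ≤ ∑ j' ∈ Finset.Icc 1 i, j' * cnt s (x - (j':ZMod n)) :=
      Finset.single_le_sum (f := fun j' : ℕ => j' * cnt s (x - (j':ZMod n))) (fun _ _ => Nat.zero_le _) hj
    have hj' := Finset.mem_Icc.mp hj
    have : 1 * 2 ≤ j * cnt s (x - (j:ZMod n)) := Nat.mul_le_mul (by omega) h2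
    omega
  | succ N ihN =>
    intro s hPhi hW
    obtain ⟨j, hj, h2⟩ := hfind s hW
    have hj' := Finset.mem_Icc.mp hj
    obtain ⟨p, hp, q, hq, hpq⟩ := Finset.one_lt_card.mp (by
      exact h2 : 1 < (Finset.univ.filter (fun r => s r = x - (j:ZMod n))).card)
    simp only [Finset.mem_filter, Finset.mem_univ, true_and] at hp hq
    set s' := Function.update s p (s p + 1) with hs'
    have hupd : ∀ q', q' ≠ p → s' q' = s q' := fun _ h => Function.update_of_ne h _ _
    have hsp : s' p = s p + 1 := Function.update_self _ _ _
    have hgs : GameStep n s s' :=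
      Or.inr ⟨p, hupd, hsp, q, hpq.symm, hq.trans hp.symm⟩
    have h10 : (1 : ZMod n) ≠ 0 := by
      intro h
      rw [← Nat.cast_one, ZMod.natCast_eq_zero_iff] at h
      have := Nat.le_of_dvd one_pos h
      omega
    rcases eq_or_lt_of_le hj'.1 with hj1 | hj1
    · -- j = 1 : single move finishes
      refine ⟨fun t => if t = 0 then s else s', by simp, ?_, 0, p, ?_, ?_, ?_⟩
      · intro t
        rcases Nat.eq_zero_or_pos t with ht | ht
        · subst ht; simpa using hgs
        · left; intro r; simp [Nat.pos_iff_ne_zero.mp ht]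
      · show s p = x - 1
        simpa [← hj1] using hp
      · show s' p = x
        rw [hsp, hp, ← hj1]
        push_cast
        ring
      · show s p ≠ s' p
        rw [hsp]
        intro hcon
        exact h10 (left_eq_add.mp hcon)
    · -- 2 ≤ j : move p up one step and recurse
      have hjm : j - 1 ∈ Finset.Icc 1 i := Finset.mem_Icc.mpr (by omega)
      have hs'px : s' p = x - ((j-1 : ℕ) : ZMod n) := by
        rw [hsp, hp, Nat.cast_sub (by omega : 1 ≤ j), Nat.cast_one]
        ring
      have hn1 : 1 ≤ n := by omega
      have e1 : ∑ j' ∈ Finset.Icc 1 i, (if s p = x - (j':ZMod n) then 1 else 0) = 1 := by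
        rw [hp]; exact ind_one' hin hn1 x hj
      have e2 : ∑ j' ∈ Finset.Icc 1 i, (if s' p = x - (j':ZMod n) then 1 else 0) = 1 := by
        rw [hs'px]; exact ind_one' hin hn1 x hjm
      have keyW := W_step hupd x i
      have hW' : i + 1 ≤ W x i s' := by omega
      have e1w : ∑ j' ∈ Finset.Icc 1 i, j' * (if s p = x - (j':ZMod n) then 1 else 0) = j := by
        rw [hp]; exact ind_one hin hn1 x (fun j => j) hj
      have e2w : ∑ j' ∈ Finset.Icc 1 i, j' * (if s' p = x - (j':ZMod n) then 1 else 0) = j - 1 := by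
        rw [hs'px]; exact ind_one hin hn1 x (fun j => j) hjm
      have keyPhi := sum_cnt_step hupd x (Finset.Icc 1 i) (fun j => j)
      simp only [e1w, e2w] at keyPhi
      have hPhi' : (∑ j' ∈ Finset.Icc 1 i, j' * cnt s' (x - j')) ≤ N := by omega
      obtain ⟨u', hu0, hustep, t', p', hb1, hb2, hb3⟩ := ihN s' hPhi' hW'
      refine ⟨fun t => match t with | 0 => s | Nat.succ t'' => u' t'', rfl, ?_, t' + 1, p', hb1, hb2, hb3⟩
      intro t
      match t with
      | 0 => simpa [hu0] using hgs
      | Nat.succ t'' => exact hustep t''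

end Stmt2Aux

theorem stmt_2 (n : ℕ) [NeZero n] (k : ZMod n → ℕ)
    (hk : ∑ i : ZMod n, k i = n) (x : ZMod n) :
    (∀ s : ℕ → Fin n → ZMod n,
        (∀ t, GameStep n (s t) (s (t + 1))) →
        (∀ c : ZMod n, (Finset.univ.filter (fun p => s 0 p = c)).card = k c) →
        ∀ t p, ¬(s t p = x - 1 ∧ s (t + 1) p = x ∧ s t p ≠ s (t + 1) p))
    ↔ (∀ i : ℕ, 1 ≤ i → i ≤ n - 1 →
        ∑ j ∈ Finset.Icc 1 i, k (x - (j : ZMod n)) ≤ i) := by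
  have hn : 1 ≤ n := Nat.one_le_iff_ne_zero.mpr (NeZero.ne n)
  constructor
  · intro hL
    by_contra hR
    push_neg at hR
    obtain ⟨i, hi1, hin, hgt⟩ := hR
    obtain ⟨s0, hs0⟩ := Stmt2Aux.exists_init k hk
    have hW0 : i + 1 ≤ Stmt2Aux.W x i s0 := by
      have he : Stmt2Aux.W x i s0 = ∑ j ∈ Finset.Icc 1 i, k (x - (j : ZMod n)) :=
        Finset.sum_congr rfl fun j _ => hs0 _
      omega
    obtain ⟨u, hu0, hustep, t, p, h1, h2, h3⟩ :=
      Stmt2Aux.reach x hi1 hin (∑ j ∈ Finset.Icc 1 i, j * Stmt2Aux.cnt s0 (x - j)) s0 le_rfl hW0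
    exact hL u hustep (fun c => by rw [hu0]; exact hs0 c) t p ⟨h1, h2, h3⟩
  · intro H s hstep hcount t p ⟨hA, hB, hC⟩
    rcases Nat.lt_or_ge n 2 with hn2 | hn2
    · -- n = 1 : all states equal
      have hn1 : n = 1 := by omega
      subst hn1
      exact hC (Subsingleton.elim _ _)
    · have H0 : ∀ i, 1 ≤ i → i ≤ n - 1 → Stmt2Aux.W x i (s 0) ≤ i := by
        intro i hi1 hin
        have he : Stmt2Aux.W x i (s 0) = ∑ j ∈ Finset.Icc 1 i, k (x - (j : ZMod n)) :=
          Finset.sum_congr rfl fun j _ => hcount _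
        rw [he]
        exact H i hi1 hin
      have hinv := Stmt2Aux.invariant x s hstep H0 t 1 le_rfl (by omega)
      have hW1 : Stmt2Aux.W x 1 (s t) = Stmt2Aux.cnt (s t) (x - 1) := by
        simp [Stmt2Aux.W]
      rcases hstep t with htriv | ⟨p', hq', hp', q, hqp, hqq⟩
      · exact hC (htriv p).symm
      · by_cases hpp : p = p'
        · subst hpp
          have h2 : 2 ≤ Stmt2Aux.cnt (s t) (x - 1) :=
            Stmt2Aux.cnt_two hqp (hqq.trans hA) hA
          omega
        · exact hC (hq' p hpp).symm
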